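/- Let X be a real normed space and let x, y ∈ X be non-zero vectors such that ‖x‖ ≤ 1, ‖y‖ ≤ 1 and ‖x − y‖ ≥ 1. Then ‖x/‖x‖ − y/‖y‖‖ ≥ ‖x − y‖. -/

import Mathlib

lemma norm_normalize_aux
    {X : Type*} [NormedAddCommGroup X] [NormedSpace ℝ X]
    (x y : X) (hx : x ≠ 0) (hy : y ≠ 0)
    (hx1 : ‖x‖ ≤ 1) (hxy : 1 ≤ ‖x - y‖) (hle : ‖y‖ ≤ ‖x‖) :
    ‖x - y‖ ≤ ‖‖x‖⁻¹ • x - ‖y‖⁻¹ • y‖ := by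
  have hnx : (0:ℝ) < ‖x‖ := norm_pos_iff.mpr hx
  have hny : (0:ℝ) < ‖y‖ := norm_pos_iff.mpr hy
  set u := ‖x‖⁻¹ • x with hu
  set v := ‖y‖⁻¹ • y with hv
  have hun : ‖u‖ = 1 := norm_smul_inv_norm hx
  have hid : x - y = ‖y‖ • (u - v) + (‖x‖ - ‖y‖) • u := by
    rw [hu, hv]
    match_scalars <;> field_simp <;> ring
  have h1 : ‖x - y‖ ≤ ‖y‖ * ‖u - v‖ + (‖x‖ - ‖y‖) := by
    calc ‖x - y‖ = ‖‖y‖ • (u - v) + (‖x‖ - ‖y‖) • u‖ := by rw [← hid]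
      _ ≤ ‖‖y‖ • (u - v)‖ + ‖(‖x‖ - ‖y‖) • u‖ := norm_add_le _ _
      _ = ‖y‖ * ‖u - v‖ + |‖x‖ - ‖y‖| * ‖u‖ := by
          rw [norm_smul, norm_smul, Real.norm_eq_abs, Real.norm_eq_abs,
            abs_of_nonneg hny.le]
      _ = ‖y‖ * ‖u - v‖ + (‖x‖ - ‖y‖) := by
          rw [hun, abs_of_nonneg (by linarith)]; ring
  nlinarith [hny, hxy, hx1, h1]

/-- Let `X` be a real normed space and `x, y ∈ X` non-zero vectors with
`‖x‖ ≤ 1`, `‖y‖ ≤ 1` and `‖x − y‖ ≥ 1`. Then `‖x/‖x‖ − y/‖y‖‖ ≥ ‖x − y‖`. -/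
theorem norm_normalize_sub_normalize_ge
    (X : Type*) [NormedAddCommGroup X] [NormedSpace ℝ X]
    (x y : X) (hx : x ≠ 0) (hy : y ≠ 0)
    (hx1 : ‖x‖ ≤ 1) (hy1 : ‖y‖ ≤ 1) (hxy : 1 ≤ ‖x - y‖) :
    ‖x - y‖ ≤ ‖‖x‖⁻¹ • x - ‖y‖⁻¹ • y‖ := by
  rcases le_total ‖y‖ ‖x‖ with h | h
  · exact norm_normalize_aux x y hx hy hx1 hxy h
  · rw [← norm_neg (x - y), neg_sub, ← norm_neg (‖x‖⁻¹ • x - ‖y‖⁻¹ • y), neg_sub]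
    exact norm_normalize_aux y x hy hx hy1 (by rwa [← norm_neg, neg_sub]) h
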